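/- arXiv:2209.06497 — 4 statements merged into one kernel-verified Lean document; each statement's English description precedes it below -/
import Mathlib

section
/- An abelian group is Higman-complete if and only if it is cotorsion. -/
universe u

/-- Evaluation of a word in two variables at `x` and `y` in a group. -/
def wordEval {G : Type*} [Group G] (w : FreeGroup Bool) (x y : G) : G :=
  FreeGroup.lift (fun b => if b then y else x) w

/-- A group `G` is Higman-complete if all systems `hᵢ = wᵢ(fᵢ, hᵢ₊₁)` are solvable. -/
def IsHigmanComplete (G : Type*) [Group G] : Prop :=
  ∀ (f : ℕ → G) (w : ℕ → FreeGroup Bool),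
    ∃ h : ℕ → G, ∀ i, h i = wordEval (w i) (f i) (h (i + 1))

/-- An abelian group `A` is cotorsion: every extension of `A` by a torsion-free
abelian group splits, i.e. whenever `A` embeds in `B` with torsion-free quotient,
the embedding admits a retraction (so `A` is a direct summand). -/
def IsCotorsion (A : Type u) [AddCommGroup A] : Prop :=
  ∀ (B : Type u) [AddCommGroup B] (i : A →+ B), Function.Injective i →
    (∀ g : B ⧸ i.range, g ≠ 0 → ¬IsOfFinAddOrder g) →
    ∃ r : B →+ A, r.comp i = AddMonoidHom.id A

set_option linter.unusedTactic false
set_option linter.unreachableTactic false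
set_option linter.unusedVariables false

noncomputable def expSum : FreeGroup Bool →* Multiplicative (ℤ × ℤ) :=
  FreeGroup.lift (fun b => Multiplicative.ofAdd (if b then ((0:ℤ),(1:ℤ)) else (1,0)))

lemma wordEval_comm {G : Type*} [CommGroup G] (w : FreeGroup Bool) (x y : G) :
    wordEval w x y = x ^ ((expSum w).toAdd.1) * y ^ ((expSum w).toAdd.2) := by
  induction w using FreeGroup.induction_on with
  | C1 => simp [wordEval, expSum]
  | of b =>
      have h1 : wordEval (FreeGroup.of b) x y = if b then y else x := FreeGroup.lift_apply_of
      have h2 : expSum (FreeGroup.of b) = Multiplicative.ofAdd (if b then ((0:ℤ),(1:ℤ)) else (1,0)) :=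
        FreeGroup.lift_apply_of
      rw [h1, h2]
      cases b <;> simp
  | inv_of b hb =>
      have h1 : wordEval (FreeGroup.of b)⁻¹ x y = (wordEval (FreeGroup.of b) x y)⁻¹ := by
        simp [wordEval, map_inv]
      rw [h1, hb, map_inv]
      simp only [toAdd_inv, Prod.fst_neg, Prod.snd_neg, zpow_neg, mul_inv]
  | mul u v hu hv =>
      have h1 : wordEval (u * v) x y = wordEval u x y * wordEval v x y := by
        simp [wordEval, map_mul]
      rw [h1, hu, hv, map_mul, mul_mul_mul_comm, ← zpow_add, ← zpow_add]
      rfl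

abbrev Solvable (A : Type) [AddCommGroup A] : Prop :=
  ∀ (a : ℕ → A) (n : ℕ → ℤ), ∃ h : ℕ → A, ∀ i, h i = a i + n i • h (i+1)

lemma hc_of_solvable {A : Type} [AddCommGroup A] (hs : Solvable A) :
    IsHigmanComplete (Multiplicative A) := by
  intro f w
  obtain ⟨h, hh⟩ := hs (fun i => (expSum (w i)).toAdd.1 • (f i).toAdd)
      (fun i => (expSum (w i)).toAdd.2)
  refine ⟨fun i => Multiplicative.ofAdd (h i), fun i => ?_⟩
  rw [wordEval_comm]
  have := hh i
  apply Multiplicative.toAdd.injective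
  simp [this, toAdd_zpow]

lemma solvable_of_hc {A : Type} [AddCommGroup A] (hc : IsHigmanComplete (Multiplicative A)) :
    Solvable A := by
  intro a n
  obtain ⟨h, hh⟩ := hc (fun i => Multiplicative.ofAdd (a i))
      (fun i => FreeGroup.of false * (FreeGroup.of true) ^ (n i))
  refine ⟨fun i => (h i).toAdd, fun i => ?_⟩
  have := hh i
  rw [wordEval_comm] at this
  have he : expSum (FreeGroup.of false * (FreeGroup.of true) ^ (n i))
      = Multiplicative.ofAdd ((1:ℤ), n i) := by
    rw [map_mul, map_zpow, expSum, FreeGroup.lift_apply_of, FreeGroup.lift_apply_of]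
    apply Multiplicative.toAdd.injective
    simp [toAdd_zpow]
  rw [he] at this
  apply_fun Multiplicative.toAdd at this
  simpa [toAdd_zpow] using this


namespace Part1

variable {A : Type} [AddCommGroup A]

noncomputable def vv (n : ℕ → ℤ) (i : ℕ) : ℕ →₀ ℤ :=
  n i • Finsupp.single (i+1) 1 - Finsupp.single i 1

noncomputable def θ (a : ℕ → A) (n : ℕ → ℤ) : (ℕ →₀ ℤ) →+ A × (ℕ →₀ ℤ) :=
  Finsupp.liftAddHom (fun i => zmultiplesHom _ (a i, vv n i))

noncomputable def θ₂ (n : ℕ → ℤ) : (ℕ →₀ ℤ) →+ (ℕ →₀ ℤ) :=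
  Finsupp.liftAddHom (fun i => zmultiplesHom _ (vv n i))

lemma snd_theta (a : ℕ → A) (n : ℕ → ℤ) (c : ℕ →₀ ℤ) :
    (θ a n c).2 = θ₂ n c := by
  have : (AddMonoidHom.snd A (ℕ →₀ ℤ)).comp (θ a n) = θ₂ n := by
    apply Finsupp.addHom_ext
    intro i m
    simp [θ, θ₂, Finsupp.liftAddHom_apply_single]
  exact DFunLike.congr_fun this c

lemma fst_theta (a : ℕ → A) (n : ℕ → ℤ) (i : ℕ) :
    θ a n (Finsupp.single i 1) = (a i, vv n i) := by
  simp [θ, Finsupp.liftAddHom_apply_single]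

lemma theta2_zero (n : ℕ → ℤ) (c : ℕ →₀ ℤ) : (θ₂ n c) 0 = - c 0 := by
  induction c using Finsupp.induction_linear with
  | zero => simp
  | add f g hf hg => rw [map_add, Finsupp.add_apply, hf, hg, Finsupp.add_apply]; ring
  | single i m =>
      rw [θ₂, Finsupp.liftAddHom_apply_single]
      simp only [zmultiplesHom_apply, vv, Finsupp.smul_apply, Finsupp.sub_apply,
        Finsupp.single_apply]
      by_cases h : i = 0 <;> simp [h, Nat.succ_ne_zero] <;> omega

lemma theta2_succ (n : ℕ → ℤ) (c : ℕ →₀ ℤ) (j : ℕ) :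
    (θ₂ n c) (j+1) = n j * c j - c (j+1) := by
  induction c using Finsupp.induction_linear with
  | zero => simp
  | add f g hf hg =>
      simp only [map_add, Finsupp.add_apply] at *
      rw [hf, hg]; ring
  | single i m =>
      rw [θ₂, Finsupp.liftAddHom_apply_single]
      simp only [zmultiplesHom_apply, vv, Finsupp.smul_apply, Finsupp.sub_apply,
        Finsupp.single_apply]
      by_cases h1 : i = j
      · subst h1
        simp [show ¬ (i = i + 1) by omega]
        ring
      · by_cases h2 : i = j + 1
        · subst h2
          simp [show ¬ (j + 1 + 1 = j + 1) by omega]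
        · simp [show ¬ (i + 1 = j + 1) by omega, h1, h2]

lemma theta2_inj (n : ℕ → ℤ) (c : ℕ →₀ ℤ) (h : θ₂ n c = 0) : c = 0 := by
  have h0 : c 0 = 0 := by
    have := theta2_zero n c
    rw [h] at this; simpa using this.symm
  have hs : ∀ j, c j = 0 := by
    intro j
    induction j with
    | zero => exact h0
    | succ k ih =>
        have := theta2_succ n c k
        rw [h] at this
        simp [ih] at this
        linarith [this]
  ext j; simp [hs j]

lemma smul_cancel {k : ℤ} (hk : k ≠ 0) {x y : ℕ →₀ ℤ} (h : k • x = k • y) : x = y := by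
  ext j
  have := DFunLike.congr_fun h j
  simp only [Finsupp.smul_apply, smul_eq_mul] at this
  exact mul_left_cancel₀ hk this

lemma theta2_sat (n : ℕ → ℤ) {k : ℤ} (hk : k ≠ 0) (f : ℕ →₀ ℤ) (c : ℕ →₀ ℤ)
    (h : θ₂ n c = k • f) : ∃ c', θ₂ n c' = f := by
  have hdvd : ∀ j, k ∣ c j := by
    intro j
    induction j with
    | zero =>
        have := theta2_zero n c
        rw [h] at this
        simp only [Finsupp.smul_apply, smul_eq_mul] at this
        exact ⟨-(f 0), by linarith⟩
    | succ m ih =>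
        have := theta2_succ n c m
        rw [h] at this
        simp only [Finsupp.smul_apply, smul_eq_mul] at this
        obtain ⟨e, he⟩ := ih
        refine ⟨n m * e - f (m+1), ?_⟩
        have : c (m+1) = n m * c m - k * f (m+1) := by linarith
        rw [this, he]; ring
  refine ⟨Finsupp.mapRange (· / k) (by simp) c, ?_⟩
  have hkc : k • Finsupp.mapRange (· / k) (by simp) c = c := by
    ext j
    simp only [Finsupp.smul_apply, Finsupp.mapRange_apply, smul_eq_mul]
    exact Int.mul_ediv_cancel' (hdvd j)
  apply smul_cancel hk
  rw [← map_zsmul, hkc, h]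

end Part1

lemma solvable_of_cotorsion {A : Type} [AddCommGroup A] (hc : IsCotorsion A) : Solvable A := by
  intro a n
  classical
  set S : AddSubgroup (A × (ℕ →₀ ℤ)) := (Part1.θ a n).range with hS
  let B := (A × (ℕ →₀ ℤ)) ⧸ S
  let mkS : (A × (ℕ →₀ ℤ)) →+ B := QuotientAddGroup.mk' S
  let iAB : A →+ B := mkS.comp (AddMonoidHom.inl A (ℕ →₀ ℤ))
  have hinj : Function.Injective iAB := by
    rw [injective_iff_map_eq_zero]
    intro x hx
    have hmem : ((x, (0:ℕ→₀ℤ)) : A × (ℕ →₀ ℤ)) ∈ S := (QuotientAddGroup.eq_zero_iff _).mp hx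
    obtain ⟨c, hc2⟩ := hmem
    have h2 : Part1.θ₂ n c = 0 := by rw [← Part1.snd_theta a n c, hc2]
    have hc0 := Part1.theta2_inj n c h2
    rw [hc0, map_zero] at hc2
    simpa using congrArg Prod.fst hc2.symm
  have htf : ∀ g : B ⧸ iAB.range, g ≠ 0 → ¬IsOfFinAddOrder g := by
    intro x hxne hxfin
    obtain ⟨n0, hn0, hx0⟩ := isOfFinAddOrder_iff_nsmul_eq_zero.mp hxfin
    obtain ⟨y, rfl⟩ := QuotientAddGroup.mk'_surjective iAB.range x
    obtain ⟨p, rfl⟩ := QuotientAddGroup.mk'_surjective S y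
    apply hxne
    rw [← map_nsmul, ← map_nsmul] at hx0
    have hmem : mkS (n0 • p) ∈ iAB.range := (QuotientAddGroup.eq_zero_iff _).mp hx0
    obtain ⟨a', ha'⟩ := hmem
    have hsub : (n0 • p - (a', 0)) ∈ S := by
      have : mkS (n0 • p - (a', 0)) = 0 := by
        rw [map_sub, ← ha']
        simp [iAB, mkS]
      exact (QuotientAddGroup.eq_zero_iff _).mp this
    obtain ⟨c, hc2⟩ := hsub
    have h2 : Part1.θ₂ n c = (n0 : ℤ) • p.2 := by
      rw [← Part1.snd_theta a n c, hc2]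
      simp [natCast_zsmul]
    obtain ⟨c', hc'⟩ := Part1.theta2_sat n (by exact_mod_cast hn0.ne' : (n0:ℤ) ≠ 0) p.2 c h2
    refine (QuotientAddGroup.eq_zero_iff _).mpr ⟨p.1 - (Part1.θ a n c').1, ?_⟩
    have : ((p.1 - (Part1.θ a n c').1, (0:ℕ→₀ℤ)) : A × (ℕ →₀ ℤ)) = p - Part1.θ a n c' := by
      apply Prod.ext
      · simp
      · simp [Part1.snd_theta a n c', hc']
    show mkS (p.1 - (Part1.θ a n c').1, 0) = QuotientAddGroup.mk' S p
    rw [this, map_sub]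
    have : mkS (Part1.θ a n c') = 0 := (QuotientAddGroup.eq_zero_iff _).mpr ⟨c', rfl⟩
    rw [this, sub_zero]
  obtain ⟨r, hr⟩ := hc B iAB hinj htf
  have hrI : ∀ x : A, r (iAB x) = x := fun x => DFunLike.congr_fun hr x
  refine ⟨fun i => r (mkS (0, Finsupp.single i 1)), fun i => ?_⟩
  have key : mkS ((0:A), Finsupp.single i 1)
      = iAB (a i) + (n i) • mkS (0, Finsupp.single (i+1) 1) := by
    have hi : iAB (a i) = mkS (a i, 0) := rfl
    rw [hi, ← map_zsmul, ← map_add, ← sub_eq_zero, ← map_sub]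
    refine (QuotientAddGroup.eq_zero_iff _).mpr ?_
    have heq : ((0:A), Finsupp.single i 1) - ((a i, (0:ℕ→₀ℤ)) + n i • ((0:A), Finsupp.single (i+1) 1))
        = -(Part1.θ a n (Finsupp.single i 1)) := by
      rw [Part1.fst_theta]
      apply Prod.ext
      · simp
      · show Finsupp.single i 1 - ((0:ℕ→₀ℤ) + n i • Finsupp.single (i+1) 1) = -(Part1.vv n i)
        rw [Part1.vv, zero_add, neg_sub]
    rw [heq]
    exact neg_mem ⟨Finsupp.single i 1, rfl⟩
  show r (mkS (0, Finsupp.single i 1)) = a i + n i • r (mkS (0, Finsupp.single (i+1) 1))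
  rw [key, map_add, map_zsmul, hrI]


namespace Part2

variable {A B : Type} [AddCommGroup A] [AddCommGroup B]

/-- graph of a partial retraction -/
def Good (i : A →+ B) (Γ : AddSubgroup (B × A)) : Prop :=
  (∀ a : A, (i a, a) ∈ Γ) ∧
  (∀ a : A, ((0 : B), a) ∈ Γ → a = 0) ∧
  (∀ (b : B) (k : ℤ), k ≠ 0 → (∃ a, (k • b, a) ∈ Γ) → ∃ a, (b, a) ∈ Γ)

/-- `x` has coordinate `r` relative to `Γ` and `b₀`. -/
def Coord (Γ : AddSubgroup (B × A)) (b₀ : B) (x : B) (r : ℚ) : Prop :=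
  ∃ k m : ℤ, k ≠ 0 ∧ r = (m : ℚ) / (k : ℚ) ∧ ∃ a, (k • x - m • b₀, a) ∈ Γ

variable {i : A →+ B} {Γ : AddSubgroup (B × A)} {b₀ : B}

lemma smul_b₀_eq_zero (hG : Good i Γ) (hb₀ : ¬ ∃ a, (b₀, a) ∈ Γ) {k : ℤ}
    (h : ∃ a, (k • b₀, a) ∈ Γ) : k = 0 := by
  by_contra hk
  exact hb₀ (hG.2.2 b₀ k hk h)

lemma coord_unique (hG : Good i Γ) (hb₀ : ¬ ∃ a, (b₀, a) ∈ Γ) {x : B} {r r' : ℚ}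
    (h1 : Coord Γ b₀ x r) (h2 : Coord Γ b₀ x r') : r = r' := by
  obtain ⟨k, m, hk, hr, a1, ha1⟩ := h1
  obtain ⟨k', m', hk', hr', a2, ha2⟩ := h2
  have key : ((k * m' - k' * m) • b₀, k' • a1 - k • a2) ∈ Γ := by
    have : ((k * m' - k' * m) • b₀ : B) = k' • (k • x - m • b₀) - k • (k' • x - m' • b₀) := by
      simp only [smul_sub, smul_smul, sub_smul]
      abel_nf
      rw [mul_comm k' k]
      abel
    rw [this]
    exact sub_mem (AddSubgroup.zsmul_mem Γ ha1 k') (AddSubgroup.zsmul_mem Γ ha2 k)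
  have h0 : k * m' - k' * m = 0 := smul_b₀_eq_zero hG hb₀ ⟨_, key⟩
  have h0' : k * m' = k' * m := by linarith
  rw [hr, hr']
  rw [div_eq_div_iff (by exact_mod_cast hk) (by exact_mod_cast hk')]
  push_cast
  have : (k : ℚ) * m' = k' * m := by exact_mod_cast h0'
  linarith [this]

lemma coord_b₀ : Coord Γ b₀ b₀ 1 :=
  ⟨1, 1, one_ne_zero, by norm_num, 0, by rw [one_smul, sub_self]; exact zero_mem Γ⟩

lemma coord_of_dom {x : B} (h : ∃ a, (x, a) ∈ Γ) : Coord Γ b₀ x 0 := by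
  obtain ⟨a, ha⟩ := h
  exact ⟨1, 0, one_ne_zero, by norm_num, a, by simpa using ha⟩

lemma dom_of_coord_zero (hG : Good i Γ) {x : B} (h : Coord Γ b₀ x 0) :
    ∃ a, (x, a) ∈ Γ := by
  obtain ⟨k, m, hk, hr, a, ha⟩ := h
  have hm : m = 0 := by
    have := hr.symm
    rw [div_eq_zero_iff] at this
    rcases this with h | h
    · exact_mod_cast h
    · exact absurd h (by exact_mod_cast hk)
  rw [hm] at ha
  simp only [zero_smul, sub_zero] at ha
  exact hG.2.2 x k hk ⟨a, ha⟩

lemma coord_add {x y : B} {r s : ℚ} (h1 : Coord Γ b₀ x r) (h2 : Coord Γ b₀ y s) :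
    Coord Γ b₀ (x + y) (r + s) := by
  obtain ⟨k, m, hk, hr, a1, ha1⟩ := h1
  obtain ⟨k', m', hk', hs, a2, ha2⟩ := h2
  refine ⟨k * k', k' * m + k * m', mul_ne_zero hk hk', ?_, k' • a1 + k • a2, ?_⟩
  · rw [hr, hs]
    field_simp
    push_cast
    ring
  · have : ((k * k') • (x + y) - (k' * m + k * m') • b₀ : B)
        = k' • (k • x - m • b₀) + k • (k' • y - m' • b₀) := by
      simp only [smul_add, smul_sub, smul_smul, add_smul]
      rw [mul_comm k' k]
      abel
    rw [this]
    exact add_mem (AddSubgroup.zsmul_mem Γ ha1 k') (AddSubgroup.zsmul_mem Γ ha2 k)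

lemma coord_zsmul (j : ℤ) {x : B} {r : ℚ} (h : Coord Γ b₀ x r) :
    Coord Γ b₀ (j • x) ((j : ℚ) * r) := by
  obtain ⟨k, m, hk, hr, a, ha⟩ := h
  refine ⟨k, j * m, hk, ?_, j • a, ?_⟩
  · rw [hr]; push_cast; ring
  · have : (k • (j • x) - (j * m) • b₀ : B) = j • (k • x - m • b₀) := by
      simp only [smul_sub, smul_smul, mul_comm j k]
    rw [this]
    exact AddSubgroup.zsmul_mem Γ ha j
  
lemma coord_sub {x y : B} {r s : ℚ} (h1 : Coord Γ b₀ x r) (h2 : Coord Γ b₀ y s) :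
    Coord Γ b₀ (x - y) (r - s) := by
  have := coord_add h1 (coord_zsmul (-1) h2)
  simpa [sub_eq_add_neg] using this

lemma coord_sat {x : B} {r : ℚ} {k : ℤ} (hk : k ≠ 0) (h : Coord Γ b₀ (k • x) r) :
    Coord Γ b₀ x (r / (k : ℚ)) := by
  obtain ⟨k', m, hk', hr, a, ha⟩ := h
  refine ⟨k' * k, m, mul_ne_zero hk' hk, ?_, a, ?_⟩
  · rw [hr]; push_cast; rw [div_div]
  · rwa [mul_smul]

lemma combine (hG : Good i Γ) (hb₀ : ¬ ∃ a, (b₀, a) ∈ Γ) {x y : B} {r s : ℚ}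
    (hx : Coord Γ b₀ x r) (hr : r ≠ 0) (hy : Coord Γ b₀ y s) :
    ∃ (w : B) (g : ℚ), Coord Γ b₀ w g ∧ g ≠ 0 ∧
      (∃ c : ℤ, r = (c : ℚ) * g) ∧ (∃ e : ℤ, s = (e : ℚ) * g) := by
  obtain ⟨k, m, hk, hrm, _⟩ := id hx
  obtain ⟨k', m', hk', hsm', _⟩ := id hy
  set a0 : ℤ := m * k' with ha0def
  set bb : ℤ := m' * k with hbbdef
  set N : ℤ := k * k' with hNdef
  have hN : (N : ℚ) ≠ 0 := by
    push_cast [hNdef]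
    exact mul_ne_zero (by exact_mod_cast hk) (by exact_mod_cast hk')
  have hra : r = (a0 : ℚ) / N := by
    rw [hrm, ha0def, hNdef]; push_cast
    rw [mul_div_mul_right _ _ (by exact_mod_cast hk' : ((k' : ℚ)) ≠ 0)]
  have hsb : s = (bb : ℚ) / N := by
    rw [hsm', hbbdef, hNdef]; push_cast
    rw [mul_comm (k : ℚ) k',
      mul_div_mul_right _ _ (by exact_mod_cast hk : ((k : ℚ)) ≠ 0)]
  have ha0 : a0 ≠ 0 := by
    intro h0
    apply hr
    rw [hra, h0]; simp
  have hd : ((Int.gcd a0 bb : ℤ) : ℚ) ≠ 0 := by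
    have : Int.gcd a0 bb ≠ 0 := by
      simp only [ne_eq, Int.gcd_eq_zero_iff]
      tauto
    exact_mod_cast this
  set d : ℤ := (Int.gcd a0 bb : ℤ) with hddef
  set g : ℚ := (d : ℚ) / (N : ℚ) with hgdef
  have hg : g ≠ 0 := div_ne_zero hd hN
  set α : ℤ := Int.gcdA a0 bb with hαdef
  set β : ℤ := Int.gcdB a0 bb with hβdef
  have hbezout : d = a0 * α + bb * β := Int.gcd_eq_gcd_ab a0 bb
  refine ⟨α • x + β • y, g, ?_, hg, ?_, ?_⟩
  · have hcw : Coord Γ b₀ (α • x + β • y) ((α : ℚ) * r + (β : ℚ) * s) :=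
      coord_add (coord_zsmul α hx) (coord_zsmul β hy)
    have : (α : ℚ) * r + (β : ℚ) * s = g := by
      have hQ : (d : ℚ) = (a0 : ℚ) * α + (bb : ℚ) * β := by exact_mod_cast hbezout
      rw [hra, hsb, hgdef, hQ]
      field_simp
    rwa [this] at hcw
  · refine ⟨a0 / d, ?_⟩
    have hdvd : d ∣ a0 := Int.gcd_dvd_left a0 bb
    have : ((a0 / d) * d : ℤ) = a0 := Int.ediv_mul_cancel hdvd
    rw [hra, hgdef]
    rw [show ((a0 : ℚ)) = (((a0 / d) * d : ℤ) : ℚ) by rw [this]]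
    push_cast
    ring
  · refine ⟨bb / d, ?_⟩
    have hdvd : d ∣ bb := Int.gcd_dvd_right a0 bb
    have : ((bb / d) * d : ℤ) = bb := Int.ediv_mul_cancel hdvd
    rw [hsb, hgdef]
    rw [show ((bb : ℚ)) = (((bb / d) * d : ℤ) : ℚ) by rw [this]]
    push_cast
    ring


lemma nsmul_of_zsmul_eq_zero {G : Type} [AddCommGroup G] {x : G} {k : ℤ} (hk : k ≠ 0)
    (h : k • x = 0) : IsOfFinAddOrder x := by
  rw [isOfFinAddOrder_iff_nsmul_eq_zero]
  refine ⟨k.natAbs, Int.natAbs_pos.mpr hk, ?_⟩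
  rcases Int.natAbs_eq k with he | he
  · rw [← natCast_zsmul, ← he, h]
  · rw [← natCast_zsmul, ← neg_neg ((k.natAbs : ℤ)), ← he, neg_zsmul, h, neg_zero]

lemma cotorsion_of_solvable {A : Type} [AddCommGroup A] (hs : Solvable A) :
    IsCotorsion A := by
  intro B _ i hinj htf
  classical
  set 𝒮 : Set (AddSubgroup (B × A)) := {Γ | Good i Γ} with h𝒮
  -- the initial graph
  have h0 : (i.prod (AddMonoidHom.id A)).range ∈ 𝒮 := by
    refine ⟨fun a => ⟨a, rfl⟩, fun a ha => ?_, fun b k hk ⟨a, ha⟩ => ?_⟩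
    · obtain ⟨a', ha'⟩ := ha
      have h1 : i a' = 0 := congrArg Prod.fst ha'
      have h2 : a' = a := congrArg Prod.snd ha'
      rw [← h2]
      apply hinj
      rw [h1, map_zero]
    · obtain ⟨a', ha'⟩ := ha
      have h1 : i a' = k • b := congrArg Prod.fst ha'
      have hq : ((QuotientAddGroup.mk' i.range) b) = 0 := by
        by_contra hne
        apply htf _ hne
        apply nsmul_of_zsmul_eq_zero hk
        rw [← map_zsmul, ← h1]
        exact (QuotientAddGroup.eq_zero_iff _).mpr ⟨a', rfl⟩
      obtain ⟨a'', ha''⟩ := (QuotientAddGroup.eq_zero_iff _).mp hq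
      exact ⟨a'', ⟨a'', Prod.ext ha'' rfl⟩⟩
  -- Zorn
  obtain ⟨Γ, -, hmax⟩ := zorn_le_nonempty₀ 𝒮 (fun c hc hchain y hy => by
    haveI : Nonempty c := ⟨⟨y, hy⟩⟩
    refine ⟨⨆ (Γ : c), (Γ : AddSubgroup (B × A)), ?_, ?_⟩
    · have hdir : Directed (· ≤ ·) (fun Γ : c => (Γ : AddSubgroup (B × A))) :=
        hchain.directed
    -- membership characterization
      have hmem : ∀ x : B × A, x ∈ (⨆ (Γ : c), (Γ : AddSubgroup (B × A))) ↔
          ∃ Γ' : c, x ∈ (Γ' : AddSubgroup (B × A)) :=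
        fun x => AddSubgroup.mem_iSup_of_directed hdir
      refine ⟨fun a => ?_, fun a ha => ?_, fun b k hk ⟨a, ha⟩ => ?_⟩
      · exact (hmem _).mpr ⟨⟨y, hy⟩, (hc hy).1 a⟩
      · obtain ⟨Γ', hΓ'⟩ := (hmem _).mp ha
        exact (hc Γ'.2).2.1 a hΓ'
      · obtain ⟨Γ', hΓ'⟩ := (hmem _).mp ha
        obtain ⟨a', ha'⟩ := (hc Γ'.2).2.2 b k hk ⟨a, hΓ'⟩
        exact ⟨a', (hmem _).mpr ⟨Γ', ha'⟩⟩
    · exact fun z hz => le_iSup (fun Γ : c => (Γ : AddSubgroup (B × A))) ⟨z, hz⟩)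
    _ h0
  have hG : Good i Γ := hmax.1
  -- totality of the maximal graph
  have hdomall : ∀ b : B, ∃ a, (b, a) ∈ Γ := by
    by_contra hne
    push_neg at hne
    obtain ⟨b₀, hb₀'⟩ := hne
    have hb₀ : ¬ ∃ a, (b₀, a) ∈ Γ := fun ⟨a, ha⟩ => hb₀' a ha
    obtain ⟨q, hq⟩ := exists_surjective_nat ℚ
    -- one-step extension function
    have step_all : ∀ (p : B × ℚ) (s : ℚ), ∃ p' : B × ℚ,
        ((Coord Γ b₀ p.1 p.2 ∧ p.2 ≠ 0) →
          (Coord Γ b₀ p'.1 p'.2 ∧ p'.2 ≠ 0 ∧ (∃ c : ℤ, p.2 = (c : ℚ) * p'.2) ∧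
            ((∃ y, Coord Γ b₀ y s) → ∃ e : ℤ, s = (e : ℚ) * p'.2))) := by
      intro p s
      by_cases hp : Coord Γ b₀ p.1 p.2 ∧ p.2 ≠ 0
      · by_cases hy : ∃ y, Coord Γ b₀ y s
        · obtain ⟨y, hys⟩ := hy
          obtain ⟨w, g, hwg, hg, hcc, hee⟩ := combine hG hb₀ hp.1 hp.2 hys
          exact ⟨(w, g), fun _ => ⟨hwg, hg, hcc, fun _ => hee⟩⟩
        · exact ⟨p, fun _ => ⟨hp.1, hp.2, ⟨1, by simp⟩, fun h => absurd h hy⟩⟩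
      · exact ⟨p, fun h => absurd h hp⟩
    choose Fstep hFstep using step_all
    set t : ℕ → B × ℚ := fun k => Nat.rec (b₀, 1) (fun k p => Fstep p (q k)) k with ht
    have ht0 : t 0 = (b₀, 1) := rfl
    have htsucc : ∀ k, t (k+1) = Fstep (t k) (q k) := fun k => rfl
    have hinv : ∀ k, Coord Γ b₀ (t k).1 (t k).2 ∧ (t k).2 ≠ 0 := by
      intro k
      induction k with
      | zero => exact ⟨by rw [ht0]; exact coord_b₀, by rw [ht0]; exact one_ne_zero⟩
      | succ k ih =>
          rw [htsucc]
          exact ⟨(hFstep (t k) (q k) ih).1, (hFstep (t k) (q k) ih).2.1⟩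
    have hcons : ∀ k, ∃ c : ℤ, (t k).2 = (c : ℚ) * (t (k+1)).2 := by
      intro k
      rw [htsucc]
      exact (hFstep (t k) (q k) (hinv k)).2.2.1
    have hcov : ∀ k, (∃ y, Coord Γ b₀ y (q k)) → ∃ e : ℤ, q k = (e : ℚ) * (t (k+1)).2 := by
      intro k
      rw [htsucc]
      exact (hFstep (t k) (q k) (hinv k)).2.2.2
    choose c hc using hcons
    -- values on the "denominators"
    have hd : ∀ k, ∃ a, ((t k).1 - c k • (t (k+1)).1, a) ∈ Γ := by
      intro k
      apply dom_of_coord_zero hG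
      have h1 : Coord Γ b₀ ((t k).1 - c k • (t (k+1)).1) ((t k).2 - (c k : ℚ) * (t (k+1)).2) := by
        have h2 := coord_zsmul (c k) (hinv (k+1)).1
        exact coord_sub (hinv k).1 h2
      rwa [← hc k, sub_self] at h1
    choose α hα using hd
    -- solve the system
    obtain ⟨h, hh⟩ := hs α c
    -- the extended graph
    set Γ' : AddSubgroup (B × A) :=
      Γ ⊔ AddSubgroup.closure (Set.range (fun k => (((t k).1, h k) : B × A))) with hΓ'
    set M : ℕ → AddSubgroup (B × A) :=
      fun K => Γ ⊔ AddSubgroup.closure {(((t K).1, h K) : B × A)} with hM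
    have hpair : ∀ k, ((((t k).1, h k)) : B × A)
        = ((t k).1 - c k • (t (k+1)).1, α k) + c k • ((t (k+1)).1, h (k+1)) := by
      intro k
      have h1 : (t k).1 = ((t k).1 - c k • (t (k+1)).1) + c k • (t (k+1)).1 :=
        (sub_add_cancel _ _).symm
      have h2 : h k = α k + c k • h (k+1) := hh k
      exact Prod.ext h1 h2
    have hMmono : Monotone M := by
      apply monotone_nat_of_le_succ
      intro k
      apply sup_le le_sup_left
      rw [AddSubgroup.closure_le]
      rintro x ⟨rfl⟩
      rw [hpair k]
      refine add_mem (le_sup_left (α := AddSubgroup (B × A)) ?_) ?_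
      · exact hα k
      · refine AddSubgroup.zsmul_mem _ (le_sup_right (α := AddSubgroup (B × A)) ?_) (c k)
        exact AddSubgroup.subset_closure rfl
    have hΓ'eq : Γ' = ⨆ K, M K := by
      apply le_antisymm
      · apply sup_le
        · exact le_trans (le_sup_left : Γ ≤ M 0) (le_iSup M 0)
        · rw [AddSubgroup.closure_le]
          rintro x ⟨k, rfl⟩
          have : (((t k).1, h k) : B × A) ∈ M k :=
            le_sup_right (α := AddSubgroup (B × A)) (AddSubgroup.subset_closure rfl)
          exact le_iSup M k this
      · apply iSup_le
        intro K
        apply sup_le le_sup_left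
        rw [AddSubgroup.closure_le]
        rintro x ⟨rfl⟩
        exact le_sup_right (α := AddSubgroup (B × A))
          (AddSubgroup.subset_closure (Set.mem_range_self K))
    have hnf : ∀ x ∈ Γ', ∃ γ ∈ Γ, ∃ K, ∃ j : ℤ, x = γ + j • (((t K).1, h K) : B × A) := by
      intro x hx
      rw [hΓ'eq, AddSubgroup.mem_iSup_of_directed hMmono.directed_le] at hx
      obtain ⟨K, hK⟩ := hx
      rw [hM, AddSubgroup.mem_sup] at hK
      obtain ⟨γ, hγ, z, hz, hsum⟩ := hK
      obtain ⟨j, hj⟩ := AddSubgroup.mem_closure_singleton.mp hz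
      exact ⟨γ, hγ, K, j, by rw [← hsum, ← hj]⟩
    -- the pairs (t k, h k) are in Γ'
    have hgen : ∀ k, (((t k).1, h k) : B × A) ∈ Γ' :=
      fun k => le_sup_right (α := AddSubgroup (B × A))
        (AddSubgroup.subset_closure (Set.mem_range_self k))
    have hΓle : Γ ≤ Γ' := le_sup_left
    -- Γ' is good
    have hgood : Good i Γ' := by
      refine ⟨fun a => hΓle (hG.1 a), ?_, ?_⟩
      · intro a ha
        obtain ⟨γ, hγ, K, j, heq⟩ := hnf _ ha
        have hfst : (0 : B) = γ.1 + j • (t K).1 := by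
          have := congrArg Prod.fst heq
          simpa using this
        have hjt : j • (t K).1 = -γ.1 := eq_neg_of_add_eq_zero_right hfst.symm
        have hdom : ∃ a', ((j • (t K).1 : B), a') ∈ Γ := by
          refine ⟨-γ.2, ?_⟩
          rw [hjt]
          exact (Prod.mk.eta (p := -γ)) ▸ neg_mem hγ
        have hc0 : Coord Γ b₀ (j • (t K).1) 0 := coord_of_dom hdom
        have hcj : Coord Γ b₀ (j • (t K).1) ((j : ℚ) * (t K).2) := coord_zsmul j (hinv K).1
        have hj0 : (j : ℚ) * (t K).2 = 0 := coord_unique hG hb₀ hcj hc0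
        have hjz : j = 0 := by
          rcases mul_eq_zero.mp hj0 with hz | hz
          · exact_mod_cast hz
          · exact absurd hz (hinv K).2
        rw [hjz, zero_smul, add_zero] at heq
        exact hG.2.1 a (heq.symm ▸ hγ)
      · rintro b k hk ⟨a, ha⟩
        obtain ⟨γ, hγ, K, j, heq⟩ := hnf _ ha
        have hfst : k • b = γ.1 + j • (t K).1 := by
          have := congrArg Prod.fst heq
          simpa using this
        have hcb : Coord Γ b₀ (k • b) ((0 : ℚ) + (j : ℚ) * (t K).2) := by
          rw [hfst]
          exact coord_add (coord_of_dom ⟨γ.2, by simpa using hγ⟩)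
            (coord_zsmul j (hinv K).1)
        have hcb2 : Coord Γ b₀ b (((0 : ℚ) + (j : ℚ) * (t K).2) / (k : ℚ)) :=
          coord_sat hk hcb
        obtain ⟨k0, hk0⟩ := hq (((0 : ℚ) + (j : ℚ) * (t K).2) / (k : ℚ))
        obtain ⟨e, he⟩ := hcov k0 ⟨b, by rw [hk0]; exact hcb2⟩
        have hcd : Coord Γ b₀ (b - e • (t (k0+1)).1) 0 := by
          have h3 := coord_sub hcb2 (coord_zsmul e (hinv (k0+1)).1)
          have h4 : ((0 : ℚ) + (j : ℚ) * (t K).2) / (k : ℚ) - (e : ℚ) * (t (k0+1)).2 = 0 := by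
            rw [← hk0, he, sub_self]
          rwa [h4] at h3
        obtain ⟨a'', ha''⟩ := dom_of_coord_zero hG hcd
        refine ⟨a'' + e • h (k0+1), ?_⟩
        have hsplit : ((b, a'' + e • h (k0+1)) : B × A)
            = (b - e • (t (k0+1)).1, a'') + e • (((t (k0+1)).1, h (k0+1)) : B × A) := by
          apply Prod.ext
          · show b = (b - e • (t (k0+1)).1) + e • (t (k0+1)).1
            rw [sub_add_cancel]
          · rfl
        rw [hsplit]
        exact add_mem (hΓle ha'') (AddSubgroup.zsmul_mem _ (hgen (k0+1)) e)
    -- contradiction with maximality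
    have : Γ' ≤ Γ := hmax.2 hgood hΓle
    apply hb₀
    refine ⟨h 0, this ?_⟩
    have := hgen 0
    rwa [ht0] at this
  -- build the retraction
  choose r hr using hdomall
  have huniq : ∀ b a, (b, a) ∈ Γ → r b = a := by
    intro b a hba
    have : ((0 : B), r b - a) ∈ Γ := by
      have := sub_mem (hr b) hba
      simpa using this
    have h0 := hG.2.1 _ this
    exact sub_eq_zero.mp h0
  refine ⟨AddMonoidHom.mk' r ?_, ?_⟩
  · intro x y
    exact huniq _ _ (add_mem (hr x) (hr y))
  · ext a
    exact huniq _ _ (hG.1 a)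


end Part2

/-- An abelian group is Higman-complete if and only if it is cotorsion. -/
theorem higmanComplete_iff_cotorsion (A : Type) [AddCommGroup A] :
    IsHigmanComplete (Multiplicative A) ↔ IsCotorsion A := by
  constructor
  · intro hc
    exact Part2.cotorsion_of_solvable (solvable_of_hc hc)
  · intro hc
    exact hc_of_solvable (solvable_of_cotorsion hc)
end

section
/- The abelianization of a locally free group is torsion-free. -/
open Subgroup

/-- Old Mathlib's `Monoid.IsTorsionFree` (removed since): no nontrivial element has finite order. -/
def Monoid.IsTorsionFree (G : Type*) [Monoid G] : Prop :=
  ∀ g : G, g ≠ 1 → ¬IsOfFinOrder g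

/-- The abelianization of a free group is torsion-free. -/
lemma freeGroup_abelianization_torsionFree (ι : Type) :
    Monoid.IsTorsionFree (Abelianization (FreeGroup ι)) := by
  have hZ : ∀ g : ι →₀ ℤ, g ≠ 0 → ¬IsOfFinAddOrder g := by
    intro g hg h; exact hg ((isOfFinAddOrder_iff_eq_zero g).mp h)
  have e : Abelianization (FreeGroup ι) ≃* Multiplicative (ι →₀ ℤ) :=
    AddEquiv.toMultiplicative (FreeAbelianGroup.equivFinsupp ι)
  intro g hg hfin
  refine hZ (Multiplicative.toAdd (e g)) ?_ ?_
  · simpa using fun h => hg (e.injective (by simpa using h))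
  · exact isOfFinOrder_ofAdd_iff.mp (by simpa using (e.toMonoidHom.isOfFinOrder hfin))

/-- Any element of the commutator subgroup lies in the closure of a finite set
of commutators. -/
lemma exists_finset_commutators {G : Type} [Group G] {x : G} (hx : x ∈ commutator G) :
    ∃ T : Finset G, ↑T ⊆ commutatorSet G ∧ x ∈ closure (T : Set G) := by
  classical
  rw [commutator_eq_closure] at hx
  refine closure_induction ?_ ?_ ?_ ?_ hx
  · intro y hy
    exact ⟨{y}, by simpa using hy, subset_closure (by simp)⟩
  · exact ⟨∅, by simp, one_mem _⟩
  · rintro y z - - ⟨T₁, hT₁, hy⟩ ⟨T₂, hT₂, hz⟩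
    refine ⟨T₁ ∪ T₂, ?_, ?_⟩
    · rw [Finset.coe_union]; exact Set.union_subset hT₁ hT₂
    · exact mul_mem
        (closure_mono (by rw [Finset.coe_union]; exact Set.subset_union_left) hy)
        (closure_mono (by rw [Finset.coe_union]; exact Set.subset_union_right) hz)
  · rintro y - ⟨T, hT, hy⟩
    exact ⟨T, hT, inv_mem hy⟩

/-- The abelianization of a locally free group (every finitely generated subgroup
is a free group) is torsion-free. -/
theorem abelianization_locallyFree_torsionFree (G : Type) [Group G]
    (hlf : ∀ H : Subgroup G, H.FG → ∃ ι : Type, Nonempty (H ≃* FreeGroup ι)) :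
    Monoid.IsTorsionFree (Abelianization G) := by
  classical
  intro x hx hfin
  apply hx
  obtain ⟨n, hn, hxn⟩ := isOfFinOrder_iff_pow_eq_one.mp hfin
  obtain ⟨g, rfl⟩ := QuotientGroup.mk'_surjective (commutator G) x
  have hgn : g ^ n ∈ commutator G := by
    rw [← QuotientGroup.eq_one_iff]
    exact hxn
  obtain ⟨T, hTsub, hT⟩ := exists_finset_commutators hgn
  choose a b hab using fun t (ht : t ∈ commutatorSet G) => ht
  -- the finitely generated subgroup
  set S : Finset G := insert g (T.attach.image (fun t => a t.1 (hTsub t.2)) ∪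
    T.attach.image (fun t => b t.1 (hTsub t.2))) with hS
  set H : Subgroup G := closure (S : Set G) with hH
  have hgH : g ∈ H := subset_closure (by simp [hS])
  have haH : ∀ t (ht : t ∈ T), a t (hTsub ht) ∈ H := fun t ht =>
    subset_closure (by
      simp only [hS, Finset.coe_insert, Finset.coe_union, Finset.coe_image, Set.mem_insert_iff,
        Set.mem_union, Set.mem_image]
      exact Or.inr (Or.inl ⟨⟨t, ht⟩, Finset.mem_coe.mpr (Finset.mem_attach _ _), rfl⟩))
  have hbH : ∀ t (ht : t ∈ T), b t (hTsub ht) ∈ H := fun t ht =>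
    subset_closure (by
      simp only [hS, Finset.coe_insert, Finset.coe_union, Finset.coe_image, Set.mem_insert_iff,
        Set.mem_union, Set.mem_image]
      exact Or.inr (Or.inr ⟨⟨t, ht⟩, Finset.mem_coe.mpr (Finset.mem_attach _ _), rfl⟩))
  have hHfg : H.FG := (Subgroup.fg_iff H).mpr ⟨S, rfl, S.finite_toSet⟩
  obtain ⟨ι, ⟨e⟩⟩ := hlf H hHfg
  -- g^n lies in the image of the commutator of H
  have hTmap : (T : Set G) ⊆ (Subgroup.map H.subtype (commutator H) : Set G) := by
    intro t ht
    open commutatorElement in refine ⟨⁅(⟨a t (hTsub ht), haH t ht⟩ : H), (⟨b t (hTsub ht), hbH t ht⟩ : H)⁆,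
      commutator_mem_commutator (mem_top _) (mem_top _), ?_⟩
    simpa using hab t (hTsub ht)
  have hgnH : g ^ n ∈ Subgroup.map H.subtype (commutator H) :=
    (closure_le _).mpr hTmap hT
  obtain ⟨h, hhc, hhval⟩ := hgnH
  have hh : h = (⟨g, hgH⟩ : H) ^ n := Subtype.ext (by simpa using hhval)
  rw [hh] at hhc
  -- abelianization of H is torsion-free
  have htfH : Monoid.IsTorsionFree (Abelianization H) := by
    intro y hy hfy
    exact freeGroup_abelianization_torsionFree ι (e.abelianizationCongr y)
      (fun h1 => hy (e.abelianizationCongr.injective (by simpa using h1)))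
      (e.abelianizationCongr.toMonoidHom.isOfFinOrder hfy)
  have h2 : Abelianization.of (⟨g, hgH⟩ : H) ^ n = 1 := by
    rw [← map_pow]
    exact (QuotientGroup.eq_one_iff _).mpr hhc
  have h1 : Abelianization.of (⟨g, hgH⟩ : H) = 1 := by
    by_contra hne
    exact htfH _ hne (isOfFinOrder_iff_pow_eq_one.mpr ⟨n, hn, h2⟩)
  -- hence g is in the commutator subgroup of H, hence of G
  have hgc : (⟨g, hgH⟩ : H) ∈ commutator H := (QuotientGroup.eq_one_iff _).mp h1
  have hmap : Subgroup.map H.subtype (commutator H) ≤ commutator G := by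
    rw [_root_.commutator_def, _root_.commutator_def, Subgroup.map_commutator]
    exact Subgroup.commutator_mono le_top le_top
  have hgcomm : g ∈ commutator G := hmap ⟨_, hgc, rfl⟩
  exact (QuotientGroup.eq_one_iff g).mpr hgcomm
end

section
/- If {G_i}_{i∈I} is a family of groups such that the abelianization Ab(G_j) is not cotorsion for some j ∈ I, then the free product *_{i∈I} G_i is not Higman-complete. -/
universe u

lemma map_wordEval {G H : Type*} [Group G] [Group H] (φ : G →* H)
    (w : FreeGroup Bool) (x y : G) :
    φ (wordEval w x y) = wordEval w (φ x) (φ y) := by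
  have : φ.comp (FreeGroup.lift (fun b : Bool => if b then y else x))
      = FreeGroup.lift (fun b : Bool => if b then φ y else φ x) := by
    refine FreeGroup.ext_hom _ _ fun a => ?_
    cases a <;> simp
  have := congrArg (fun ψ : FreeGroup Bool →* H => ψ w) this
  simpa [wordEval] using this

lemma higman_of_surjective {G H : Type*} [Group G] [Group H] (φ : G →* H)
    (hs : Function.Surjective φ) (hG : IsHigmanComplete G) : IsHigmanComplete H := by
  intro f w
  choose f' hf' using fun i => hs (f i)
  obtain ⟨h, hh⟩ := hG f' w
  refine ⟨fun i => φ (h i), fun i => ?_⟩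
  show φ (h i) = _
  rw [hh i, map_wordEval, hf']

/-- In an abelian (multiplicative) Higman-complete group, all systems
`z i = a i * z (i+1) ^ c i` are solvable. -/
lemma systems_of_higman {M : Type*} [CommGroup M] (hM : IsHigmanComplete M)
    (a : ℕ → M) (c : ℕ → ℤ) : ∃ z : ℕ → M, ∀ i, z i = a i * z (i + 1) ^ c i := by
  obtain ⟨z, hz⟩ := hM a (fun i => FreeGroup.of false * (FreeGroup.of true) ^ (c i))
  refine ⟨z, fun i => ?_⟩
  have := hz i
  rwa [wordEval, map_mul, map_zpow, FreeGroup.lift_apply_of, FreeGroup.lift_apply_of] at this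


lemma cotorsion_of_systems {A : Type u} [AddCommGroup A]
    (P : ∀ (a : ℕ → A) (c : ℕ → ℤ), ∃ z : ℕ → A, ∀ i, z i = a i + c i • z (i + 1)) :
    IsCotorsion A := by
  intro B _ i hinj htf
  classical
  -- torsion-freeness in ℤ-form
  have htf' : ∀ (x : B ⧸ i.range) (n : ℤ), n ≠ 0 → n • x = 0 → x = 0 := by
    intro x n hn h0
    by_contra hx0
    refine htf x hx0 (isOfFinAddOrder_iff_nsmul_eq_zero.mpr
      ⟨n.natAbs, Int.natAbs_pos.mpr hn, ?_⟩)
    rcases Int.natAbs_eq n with h | h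
    · rw [← natCast_zsmul, ← h, h0]
    · rw [← natCast_zsmul, ← neg_neg ((n.natAbs : ℤ)), ← h, neg_zsmul, h0, neg_zero]
  -- the Zorn poset
  set GoodS : Set (AddSubgroup (B × A)) :=
    {S | (∀ a : A, (i a, a) ∈ S) ∧ (∀ a : A, ((0 : B), a) ∈ S → a = 0) ∧
      (∀ (x : B) (n : ℤ), n ≠ 0 → (∃ a, (n • x, a) ∈ S) → ∃ a, (x, a) ∈ S)} with hGoodS
  have hS₀ : (i.prod (AddMonoidHom.id A)).range ∈ GoodS := by
    have hmem : ∀ x : B, ∀ a : A,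
        ((x, a) ∈ (i.prod (AddMonoidHom.id A)).range ↔ x = i a) := by
      intro x a
      constructor
      · rintro ⟨a', ha'⟩
        have h2 : a' = a := congrArg Prod.snd ha'
        have h1 : i a' = x := congrArg Prod.fst ha'
        rw [← h1, h2]
      · rintro rfl
        exact ⟨a, by simp⟩
    refine ⟨fun a => (hmem _ _).mpr rfl, fun a ha => ?_, fun x n hn ⟨a, ha⟩ => ?_⟩
    · have := (hmem _ _).mp ha
      exact hinj (by simpa using this.symm)
    · -- n • x ∈ range i so x ∈ range i since quotient torsion-free
      have hx : n • x = i a := (hmem _ _).mp ha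
      have h0 : n • (QuotientAddGroup.mk x : B ⧸ i.range) = 0 := by
        rw [← QuotientAddGroup.mk_zsmul, hx, QuotientAddGroup.eq_zero_iff]
        exact ⟨a, rfl⟩
      have := htf' _ n hn h0
      rw [QuotientAddGroup.eq_zero_iff] at this
      obtain ⟨a', ha'⟩ := this
      exact ⟨a', (hmem _ _).mpr ha'.symm⟩
  -- Zorn's lemma
  obtain ⟨S, hmax⟩ : ∃ S, Maximal (· ∈ GoodS) S := by
    refine zorn_le₀ GoodS ?_
    intro c hc hchain
    rcases Set.eq_empty_or_nonempty c with rfl | hne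
    · exact ⟨_, hS₀, by simp⟩
    · refine ⟨sSup c, ?_, fun z hz => le_sSup hz⟩
      have hmem := fun x => AddSubgroup.mem_sSup_of_directedOn hne
        (hchain.directedOn) (x := x)
      obtain ⟨S₁, hS₁⟩ := hne
      refine ⟨fun a => (hmem _).mpr ⟨S₁, hS₁, (hc hS₁).1 a⟩, fun a ha => ?_,
        fun x n hn ⟨a, ha⟩ => ?_⟩
      · obtain ⟨S₂, hS₂, hmem2⟩ := (hmem _).mp ha
        exact (hc hS₂).2.1 a hmem2
      · obtain ⟨S₂, hS₂, hmem2⟩ := (hmem _).mp ha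
        obtain ⟨a', ha'⟩ := (hc hS₂).2.2 x n hn ⟨a, hmem2⟩
        exact ⟨a', (hmem _).mpr ⟨S₂, hS₂, ha'⟩⟩
  obtain ⟨⟨hG1, hG2, hG3⟩, hmax2⟩ := hmax
  -- uniqueness of second coordinates
  have huniq : ∀ (x : B) (a a' : A), (x, a) ∈ S → (x, a') ∈ S → a = a' := by
    intro x a a' h1 h2
    have hsub : ((0 : B), a - a') ∈ S := by
      have := S.sub_mem h1 h2
      simpa using this
    have := hG2 _ hsub
    exact sub_eq_zero.mp this
  -- every element of B is in the domain
  have hdom : ∀ b : B, ∃ a, (b, a) ∈ S := by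
    by_contra hcon
    push_neg at hcon
    obtain ⟨b, hb⟩ := hcon
    -- the domain of S and the quotient by it
    set M : AddSubgroup B := S.map (AddMonoidHom.fst B A) with hMdef
    have hM : ∀ x : B, x ∈ M ↔ ∃ a, (x, a) ∈ S := by
      intro x
      constructor
      · rintro ⟨⟨x', a⟩, hp, rfl⟩
        exact ⟨a, hp⟩
      · rintro ⟨a, ha⟩
        exact ⟨(x, a), ha, rfl⟩
    set qm : B →+ B ⧸ M := QuotientAddGroup.mk' M with hqmdef
    have hMk : ∀ x : B, qm x = 0 ↔ x ∈ M := by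
      intro x
      exact QuotientAddGroup.eq_zero_iff x
    have hqsurj : Function.Surjective qm := QuotientAddGroup.mk'_surjective M
    have htfC : ∀ (x : B ⧸ M) (n : ℤ), n ≠ 0 → n • x = 0 → x = 0 := by
      intro x n hn h0
      obtain ⟨y, rfl⟩ := hqsurj x
      have h1 : n • y ∈ M := by
        rw [← hMk, map_zsmul, h0]
      obtain ⟨a, ha⟩ := hG3 y n hn ((hM _).mp h1)
      rw [hMk]
      exact (hM _).mpr ⟨a, ha⟩
    have hcancel : ∀ (x y : B ⧸ M) (n : ℤ), n ≠ 0 → n • x = n • y → x = y := by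
      intro x y n hn hxy
      have := htfC (x - y) n hn (by rw [smul_sub, hxy, sub_self])
      exact sub_eq_zero.mp this
    set β : B ⧸ M := qm b with hβdef
    have hβ : β ≠ 0 := by
      rw [hβdef, Ne, hMk, hM]
      push_neg
      exact hb
    -- the rank-one purification of ⟨β⟩
    set InR : B ⧸ M → Prop := fun x => ∃ n : ℤ, n ≠ 0 ∧ ∃ p : ℤ, n • x = p • β
      with hInRdef
    have hRβ : InR β := ⟨1, one_ne_zero, 1, rfl⟩
    -- countability of R
    have hcount : Countable {x : B ⧸ M // InR x} := by
      choose n hn p hp using fun x : {x : B ⧸ M // InR x} => x.2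
      have hinjF : Function.Injective (fun x : {x : B ⧸ M // InR x} =>
          (p x : ℚ) / (n x : ℚ)) := by
        intro x y hxy
        have hnx : (n x : ℚ) ≠ 0 := Int.cast_ne_zero.mpr (hn x)
        have hny : (n y : ℚ) ≠ 0 := Int.cast_ne_zero.mpr (hn y)
        have hpq : (p x : ℚ) * (n y : ℚ) = (p y : ℚ) * (n x : ℚ) := by
          field_simp at hxy
          linarith [hxy]
        have hint : p x * n y = p y * n x := by exact_mod_cast hpq
        apply Subtype.ext
        apply hcancel _ _ (n x * n y) (mul_ne_zero (hn x) (hn y))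
        calc (n x * n y) • x.1 = n y • (n x • x.1) := by
              rw [← mul_smul, mul_comm]
          _ = n y • (p x • β) := by rw [hp x]
          _ = (p x * n y) • β := by rw [← mul_smul, mul_comm]
          _ = (p y * n x) • β := by rw [hint]
          _ = n x • (p y • β) := by rw [← mul_smul, mul_comm]
          _ = n x • (n y • y.1) := by rw [hp y]
          _ = (n x * n y) • y.1 := by rw [← mul_smul]
      exact hinjF.countable
    have hRne : Nonempty {x : B ⧸ M // InR x} := ⟨⟨β, hRβ⟩⟩
    obtain ⟨e, he⟩ := exists_surjective_nat {x : B ⧸ M // InR x}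
    -- pairing: any two elements of R lie in a common cyclic subgroup
    have pair : ∀ x y : {x : B ⧸ M // InR x},
        ∃ z : B ⧸ M, InR z ∧ z ≠ 0 ∧ (∃ s : ℤ, x.1 = s • z) ∧ (∃ t : ℤ, y.1 = t • z) := by
      intro xs ys
      obtain ⟨n₁, hn₁, p₁, hp₁⟩ := xs.2
      obtain ⟨n₂, hn₂, p₂, hp₂⟩ := ys.2
      set x := xs.1 with hxdef
      set y := ys.1 with hydef
      have hN : n₁ * n₂ ≠ 0 := mul_ne_zero hn₁ hn₂
      have hx : (n₁ * n₂) • x = (n₂ * p₁) • β := by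
        rw [mul_comm n₁ n₂, mul_smul, hp₁, ← mul_smul]
      have hy : (n₁ * n₂) • y = (n₁ * p₂) • β := by
        rw [mul_smul, hp₂, ← mul_smul]
      by_cases hg : Int.gcd (n₂ * p₁) (n₁ * p₂) = 0
      · have ha0 : n₂ * p₁ = 0 := (Int.gcd_eq_zero_iff.mp hg).1
        have hb0 : n₁ * p₂ = 0 := (Int.gcd_eq_zero_iff.mp hg).2
        have hx0 : x = 0 := by
          apply hcancel _ _ _ hN
          rw [hx, ha0, zero_smul, smul_zero]
        have hy0 : y = 0 := by
          apply hcancel _ _ _ hN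
          rw [hy, hb0, zero_smul, smul_zero]
        exact ⟨β, hRβ, hβ, ⟨0, by rw [hx0, zero_smul]⟩, ⟨0, by rw [hy0, zero_smul]⟩⟩
      · have hgne : (Int.gcd (n₂ * p₁) (n₁ * p₂) : ℤ) ≠ 0 := Int.natCast_ne_zero.mpr hg
        have hz : (n₁ * n₂) • (Int.gcdA (n₂ * p₁) (n₁ * p₂) • x
            + Int.gcdB (n₂ * p₁) (n₁ * p₂) • y)
            = (Int.gcd (n₂ * p₁) (n₁ * p₂) : ℤ) • β := by
          rw [smul_add, smul_comm (n₁ * n₂) (Int.gcdA (n₂ * p₁) (n₁ * p₂)) x,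
            smul_comm (n₁ * n₂) (Int.gcdB (n₂ * p₁) (n₁ * p₂)) y, hx, hy,
            ← mul_smul, ← mul_smul, ← add_smul]
          congr 1
          rw [Int.gcd_eq_gcd_ab (n₂ * p₁) (n₁ * p₂)]
          ring
        have hzR : InR (Int.gcdA (n₂ * p₁) (n₁ * p₂) • x
            + Int.gcdB (n₂ * p₁) (n₁ * p₂) • y) := ⟨n₁ * n₂, hN, _, hz⟩
        have hzne : (Int.gcdA (n₂ * p₁) (n₁ * p₂) • x
            + Int.gcdB (n₂ * p₁) (n₁ * p₂) • y) ≠ 0 := by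
          intro h0
          rw [h0, smul_zero] at hz
          exact hβ (htfC β _ hgne hz.symm)
        refine ⟨_, hzR, hzne, ⟨n₂ * p₁ / Int.gcd (n₂ * p₁) (n₁ * p₂), ?_⟩,
          ⟨n₁ * p₂ / Int.gcd (n₂ * p₁) (n₁ * p₂), ?_⟩⟩
        · apply hcancel _ _ _ hN
          rw [hx, smul_comm, hz, ← mul_smul,
            Int.ediv_mul_cancel (Int.gcd_dvd_left _ _)]
        · apply hcancel _ _ _ hN
          rw [hy, smul_comm, hz, ← mul_smul,
            Int.ediv_mul_cancel (Int.gcd_dvd_right _ _)]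
    choose zf hzfull using pair
    have hzR := fun x y => (hzfull x y).1
    have hzne := fun x y => (hzfull x y).2.1
    choose sf hsf using fun x y => (hzfull x y).2.2.1
    choose tf htf2 using fun x y => (hzfull x y).2.2.2
    -- build the cyclic chain exhausting R
    set gch : ℕ → {x : B ⧸ M // InR x} := fun n =>
      Nat.rec ⟨β, hRβ⟩ (fun n prev => ⟨zf prev (e n), hzR prev (e n)⟩) n with hgchdef
    have hgch_succ : ∀ n, (gch (n + 1)).1 = zf (gch n) (e n) := fun n => rfl
    have hgne2 : ∀ n, (gch n).1 ≠ 0 := by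
      intro n
      cases n with
      | zero => exact hβ
      | succ n => exact hzne (gch n) (e n)
    have hrel : ∀ n, ∃ cc : ℤ, (gch n).1 = cc • (gch (n + 1)).1 := by
      intro n
      exact ⟨sf (gch n) (e n), by rw [hgch_succ]; exact hsf (gch n) (e n)⟩
    have hcov : ∀ x : B ⧸ M, InR x → ∃ (n : ℕ) (t : ℤ), x = t • (gch n).1 := by
      intro x hx
      obtain ⟨m, hm⟩ := he ⟨x, hx⟩
      refine ⟨m + 1, tf (gch m) (e m), ?_⟩
      rw [hgch_succ]
      have h1 : (e m).1 = x := by rw [hm]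
      rw [← h1]
      exact htf2 (gch m) (e m)
    choose cc hcc using hrel
    -- lift the chain to B
    choose xx hxx using fun n => hqsurj (gch n).1
    have hmem : ∀ n, xx n - cc n • xx (n + 1) ∈ M := by
      intro n
      rw [← hMk, map_sub, map_zsmul, hxx, hxx, ← hcc, sub_self]
    choose aa haa using fun n => (hM _).mp (hmem n)
    obtain ⟨zz, hzz⟩ := P aa cc
    set pp : ℕ → B × A := fun n => (xx n, zz n) with hppdef
    have hstep : ∀ n, pp n - cc n • pp (n + 1) ∈ S := by
      intro n
      have heq : pp n - cc n • pp (n + 1) = (xx n - cc n • xx (n + 1), aa n) := by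
        rw [hppdef]
        have h2 : zz n - cc n • zz (n + 1) = aa n := by
          rw [hzz n]; abel
        simp [Prod.ext_iff, h2]
      rw [heq]
      exact haa n
    set S' : AddSubgroup (B × A) := S ⊔ AddSubgroup.closure (Set.range pp) with hS'def
    have hSleS' : S ≤ S' := le_sup_left
    have hclS' : AddSubgroup.closure (Set.range pp) ≤ S' := le_sup_right
    have hppS' : ∀ n, pp n ∈ S' :=
      fun n => hclS' (AddSubgroup.subset_closure ⟨n, rfl⟩)
    -- pushing an index up the chain
    have hpush : ∀ (w : B × A) (n k : ℤ) (hmn : True), True := fun _ _ _ _ => trivial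
    have push : ∀ (w : B × A) (m : ℕ) (k : ℤ) (N : ℕ), m ≤ N → w - k • pp m ∈ S →
        ∃ k' : ℤ, w - k' • pp N ∈ S := by
      intro w m k N hmN hw
      induction N with
      | zero =>
        rw [Nat.le_zero.mp hmN] at hw
        exact ⟨k, hw⟩
      | succ N ih =>
        rcases Nat.lt_or_ge m (N + 1) with hlt | hge
        · obtain ⟨k', hk'⟩ := ih (Nat.lt_succ_iff.mp hlt)
          refine ⟨k' * cc N, ?_⟩
          have heq : w - (k' * cc N) • pp (N + 1)
              = (w - k' • pp N) + k' • (pp N - cc N • pp (N + 1)) := by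
            rw [smul_sub, mul_smul]
            abel
          rw [heq]
          exact S.add_mem hk' (S.zsmul_mem (hstep N) k')
        · have : m = N + 1 := le_antisymm hmN hge
          rw [this] at hw
          exact ⟨k, hw⟩
    have hmemS' : ∀ w ∈ S', ∃ (n : ℕ) (k : ℤ), w - k • pp n ∈ S := by
      intro w hw
      rw [hS'def, AddSubgroup.mem_sup] at hw
      obtain ⟨y, hy, t, ht', rfl⟩ := hw
      have ht2 : ∃ (n : ℕ) (k : ℤ), t - k • pp n ∈ S := by
        refine AddSubgroup.closure_induction ?_ ?_ ?_ ?_ ht'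
        · rintro x ⟨n, rfl⟩
          exact ⟨n, 1, by rw [one_smul, sub_self]; exact S.zero_mem⟩
        · exact ⟨0, 0, by rw [zero_smul, sub_zero]; exact S.zero_mem⟩
        · rintro x y' hx hy' ⟨n₁, k₁, h1⟩ ⟨n₂, k₂, h2⟩
          obtain ⟨k₁', h1'⟩ := push x n₁ k₁ (max n₁ n₂) (le_max_left _ _) h1
          obtain ⟨k₂', h2'⟩ := push y' n₂ k₂ (max n₁ n₂) (le_max_right _ _) h2
          refine ⟨max n₁ n₂, k₁' + k₂', ?_⟩
          have heq : (x + y') - (k₁' + k₂') • pp (max n₁ n₂)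
              = (x - k₁' • pp (max n₁ n₂)) + (y' - k₂' • pp (max n₁ n₂)) := by
            rw [add_smul]; abel
          rw [heq]
          exact S.add_mem h1' h2'
        · rintro x hx ⟨n₁, k₁, h1⟩
          refine ⟨n₁, -k₁, ?_⟩
          have heq : (-x) - (-k₁) • pp n₁ = -(x - k₁ • pp n₁) := by
            rw [neg_smul]; abel
          rw [heq]
          exact S.neg_mem h1
      obtain ⟨n, k, hk⟩ := ht2
      refine ⟨n, k, ?_⟩
      have heq : y + t - k • pp n = y + (t - k • pp n) := by abel
      rw [heq]
      exact S.add_mem hy hk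
    -- elements of B whose class lies in R are in the domain of S'
    have hql : ∀ (y : B) (n : ℕ) (k : ℤ), y - k • xx n ∈ M → ∃ a, (y, a) ∈ S' := by
      intro y n k hy
      obtain ⟨a', ha'⟩ := (hM _).mp hy
      refine ⟨a' + k • zz n, ?_⟩
      have heq : (y, a' + k • zz n) = (y - k • xx n, a') + k • pp n := by
        simp only [hppdef, Prod.smul_mk, Prod.mk_add_mk, Prod.mk.injEq]
        exact ⟨by abel, trivial⟩
      rw [heq]
      exact S'.add_mem (hSleS' ha') (S'.zsmul_mem (hppS' n) k)
    have hcov' : ∀ y : B, InR (qm y) → ∃ a, (y, a) ∈ S' := by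
      intro y hy
      obtain ⟨n, t, hty⟩ := hcov _ hy
      apply hql y n t
      rw [← hMk, map_sub, map_zsmul, hxx, hty, sub_self]
    -- S' is good
    have hS'good : S' ∈ GoodS := by
      refine ⟨fun a => hSleS' (hG1 a), fun a ha => ?_, fun x n hn ⟨a, ha⟩ => ?_⟩
      · obtain ⟨m, k, hk⟩ := hmemS' _ ha
        have h2 : ((0 : B) - k • xx m, a - k • zz m) ∈ S := by
          have heq : ((0 : B), a) - k • pp m = ((0 : B) - k • xx m, a - k • zz m) := by
            rw [hppdef]; simp [Prod.ext_iff]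
          rw [← heq]
          exact hk
        have hMm : (0 : B) - k • xx m ∈ M := (hM _).mpr ⟨_, h2⟩
        have hk0 : k = 0 := by
          by_contra hkne
          have : qm ((0 : B) - k • xx m) = 0 := (hMk _).mpr hMm
          rw [map_sub, map_zero, map_zsmul, hxx, zero_sub, neg_eq_zero] at this
          exact hgne2 m (htfC _ k hkne this)
        rw [hk0, zero_smul, sub_zero] at hk
        exact hG2 a hk
      · obtain ⟨m, k, hk⟩ := hmemS' _ ha
        have h2 : (n • x - k • xx m, a - k • zz m) ∈ S := by
          have heq : (n • x, a) - k • pp m = (n • x - k • xx m, a - k • zz m) := by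
            rw [hppdef]; simp [Prod.ext_iff]
          rw [← heq]
          exact hk
        have hMm : n • x - k • xx m ∈ M := (hM _).mpr ⟨_, h2⟩
        have hq1 : n • qm x = k • (gch m).1 := by
          have : qm (n • x - k • xx m) = 0 := (hMk _).mpr hMm
          rw [map_sub, map_zsmul, map_zsmul, hxx, sub_eq_zero] at this
          exact this
        have hInR : InR (qm x) := by
          obtain ⟨n', hn', p', hp'⟩ := (gch m).2
          refine ⟨n * n', mul_ne_zero hn hn', k * p', ?_⟩
          rw [mul_comm n n', mul_smul, hq1, smul_comm n' k, hp', ← mul_smul]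
        obtain ⟨a', ha'⟩ := hcov' x hInR
        exact ⟨a', ha'⟩
    -- S' strictly contains S : contradiction with maximality
    have hbS' : ∃ a, (b, a) ∈ S' := hcov' b hRβ
    obtain ⟨ab, hab⟩ := hbS'
    have hS'leS : S' ≤ S := hmax2 hS'good hSleS'
    exact hb ab (hS'leS hab)
  choose r hr using hdom
  have radd : ∀ x y : B, r (x + y) = r x + r y :=
    fun x y => huniq _ _ _ (hr (x + y)) (S.add_mem (hr x) (hr y))
  refine ⟨AddMonoidHom.mk' r radd, ?_⟩
  ext a
  exact huniq _ _ _ (hr (i a)) (hG1 a)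

/-- If `Ab(G j)` is not cotorsion for some `j`, then the free product `*_{i} G i`
is not Higman-complete. -/
theorem freeProduct_not_higmanComplete {I : Type} (G : I → Type) [∀ i, Group (G i)]
    (j : I) (h : ¬ IsCotorsion (Additive (Abelianization (G j)))) :
    ¬ IsHigmanComplete (Monoid.CoprodI G) := by
  intro hHC
  apply h
  classical
  set ψ : ∀ i, G i →* Abelianization (G j) := fun i =>
    if hij : i = j then hij.symm ▸ (Abelianization.of (G := G j)) else 1 with hψ
  have hψj : ψ j = Abelianization.of := by simp [hψ]
  have hsurj : Function.Surjective (Monoid.CoprodI.lift ψ) := by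
    intro y
    obtain ⟨x, rfl⟩ := QuotientGroup.mk'_surjective _ y
    exact ⟨Monoid.CoprodI.of x, by rw [Monoid.CoprodI.lift_of, hψj]; rfl⟩
  have hAb : IsHigmanComplete (Abelianization (G j)) :=
    higman_of_surjective _ hsurj hHC
  apply cotorsion_of_systems
  intro a c
  obtain ⟨z, hz⟩ := systems_of_higman hAb (fun i => (a i).toMul) c
  refine ⟨fun i => Additive.ofMul (z i), fun i => ?_⟩
  have := congrArg Additive.ofMul (hz i)
  simpa [ofMul_zpow] using this
end

section
/- The groups ⊕_{ℵ₀} ∏_{ℵ₀} ℤ and ∏_{ℵ₀} ⊕_{ℵ₀} ℤ (countable direct sum of countable direct products of ℤ, versus countable direct product of countable direct sums of ℤ) are not isomorphic as abelian groups. -/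
open DirectSum

/-- An additive map `ℤ^ℕ → ℤ` killing all basis vectors kills every
finitely-supported vector. -/
lemma lemA (f : (ℕ → ℤ) →+ ℤ) (hf : ∀ i, f (Pi.single i 1) = 0) :
    ∀ (n : ℕ) (v : ℕ → ℤ), (∀ i, n ≤ i → v i = 0) → f v = 0 := by
  intro n
  induction n with
  | zero =>
    intro v hv
    have : v = 0 := funext fun i => hv i (Nat.zero_le i)
    rw [this, map_zero]
  | succ n ih =>
    intro v hv
    have hdecomp : v = Function.update v n 0 + (v n) • Pi.single n 1 := by
      funext p
      by_cases hp : p = n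
      · subst hp; simp
      · simp [Function.update_of_ne hp, Pi.single_apply, hp]
    rw [hdecomp, map_add, map_zsmul, hf, smul_zero, add_zero]
    apply ih
    intro i hi
    by_cases hi' : i = n
    · subst hi'; simp
    · rw [Function.update_of_ne hi']
      exact hv i (by omega)

/-- If all coordinates of `v` are divisible by `d` then so is `f v`. -/
lemma lemB (f : (ℕ → ℤ) →+ ℤ) (d : ℤ) (v : ℕ → ℤ) (h : ∀ p, d ∣ v p) :
    d ∣ f v := by
  have hv : v = d • fun p => v p / d := by
    funext p
    simpa using (Int.mul_ediv_cancel' (h p)).symm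
  rw [hv, map_zsmul]
  exact Dvd.intro _ rfl


/-- Specker's theorem: a homomorphism `ℤ^ℕ → ℤ` vanishing on all basis
vectors is zero. -/
theorem specker (f : (ℕ → ℤ) →+ ℤ) (hf : ∀ i, f (Pi.single i 1) = 0)
    (x : ℕ → ℤ) : f x = 0 := by
  by_contra ha
  set a : ℤ := f x with ha_def
  -- the recursively defined divisibility chain
  set ds : ℕ → ℤ × ℤ := fun K =>
    Nat.rec ((1 : ℤ), (0 : ℤ))
      (fun K p => (p.1 * ((K : ℤ) + 1 + 2 * |p.2 + a * p.1|), p.2 + a * p.1)) K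
    with hds
  set d : ℕ → ℤ := fun K => (ds K).1 with hd
  set s : ℕ → ℤ := fun K => (ds K).2 with hs
  have hd0 : d 0 = 1 := rfl
  have hs0 : s 0 = 0 := rfl
  have hssucc : ∀ K, s (K + 1) = s K + a * d K := fun K => rfl
  have hdsucc : ∀ K, d (K + 1) = d K * ((K : ℤ) + 1 + 2 * |s (K + 1)|) := fun K => rfl
  have hdpos : ∀ K, 1 ≤ d K := by
    intro K
    induction K with
    | zero => simp [hd0]
    | succ K ih =>
      rw [hdsucc K]
      nlinarith [abs_nonneg (s (K + 1)), Int.natCast_nonneg K]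
  have hdvd : ∀ K L, K ≤ L → d K ∣ d L := by
    intro K L h
    induction L with
    | zero =>
      have : K = 0 := by omega
      subst this
      exact dvd_refl _
    | succ L ih =>
      rcases Nat.lt_or_ge K (L + 1) with h' | h'
      · exact dvd_trans (ih (by omega)) (by rw [hdsucc L]; exact dvd_mul_right _ _)
      · have : K = L + 1 := by omega
        subst this; rfl
  have hbig : ∀ K : ℕ, (K : ℤ) + 2 * |s K| ≤ d K := by
    intro K
    cases K with
    | zero => simp [hd0, hs0]
    | succ K =>
      rw [hdsucc K]
      have hc : ((K + 1 : ℕ) : ℤ) = (K : ℤ) + 1 := by push_cast; ring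
      rw [hc]
      nlinarith [abs_nonneg (s (K + 1)), Int.natCast_nonneg K, hdpos K]
  -- diagonal element
  set y : ℕ → ℤ := fun p => x p * ∑ k ∈ Finset.range (p + 1), d k with hy
  set trunc : ℕ → ℕ → ℤ := fun K p => ∑ k ∈ Finset.range K, (if k ≤ p then d k * x p else 0)
    with htr
  -- f of truncation is s K
  have hsum_s : ∀ K, s K = ∑ k ∈ Finset.range K, a * d k := by
    intro K
    induction K with
    | zero => simp [hs0]
    | succ K ih => rw [hssucc K, Finset.sum_range_succ, ih]
  have htail : ∀ k : ℕ, f (fun p => if k ≤ p then x p else 0) = a := by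
    intro k
    have h0 : f (x - fun p => if k ≤ p then x p else 0) = 0 := by
      apply lemA f hf k
      intro i hi
      simp [hi]
    rw [map_sub, ← ha_def] at h0
    omega
  have htrunc_f : ∀ K, f (trunc K) = s K := by
    intro K
    have hrw : trunc K = ∑ k ∈ Finset.range K, d k • (fun p => if k ≤ p then x p else 0) := by
      funext p
      rw [Finset.sum_apply]
      apply Finset.sum_congr rfl
      intro k _
      simp [mul_ite]
    rw [hrw, map_sum, hsum_s]
    apply Finset.sum_congr rfl
    intro k _
    rw [map_zsmul, htail k, smul_eq_mul, mul_comm]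
  -- key divisibility
  have hkey : ∀ K, d K ∣ f y - s K := by
    intro K
    have hpt : ∀ p, d K ∣ (y - trunc K) p := by
      intro p
      have e1 : trunc K p = ∑ k ∈ Finset.range (min K (p + 1)), d k * x p := by
        show (∑ k ∈ Finset.range K, if k ≤ p then d k * x p else 0) = _
        rw [← Finset.sum_subset (Finset.range_subset_range.2 (min_le_left K (p + 1)))
          (fun k _ hk => by
            have : ¬ k ≤ p := by
              simp only [Finset.mem_range] at *
              omega
            simp [this])]
        apply Finset.sum_congr rfl
        intro k hk
        have : k ≤ p := by
          simp only [Finset.mem_range] at hk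
          omega
        simp [this]
      have e2 : (y - trunc K) p = x p * ∑ k ∈ Finset.Ico (min K (p + 1)) (p + 1), d k := by
        rw [Pi.sub_apply, e1, hy]
        rw [Finset.sum_Ico_eq_sub _ (min_le_right K (p + 1))]
        rw [← Finset.sum_mul]
        ring
      rw [e2]
      apply Dvd.dvd.mul_left
      apply Finset.dvd_sum
      intro k hk
      apply hdvd
      simp only [Finset.mem_Ico] at hk
      omega
    have := lemB f (d K) (y - trunc K) hpt
    rwa [map_sub, htrunc_f K] at this
  -- conclusion
  set z : ℤ := f y with hz
  have hcontr : ∀ K : ℕ, |z| < (K : ℤ) → z = s K := by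
    intro K hK
    have h1 := hkey K
    have h2 : |z - s K| < d K := by
      have := hbig K
      have habs : |z - s K| ≤ |z| + |s K| := abs_sub _ _
      linarith [abs_nonneg (s K)]
    have := Int.eq_zero_of_abs_lt_dvd h1 h2
    omega
  set K : ℕ := |z|.toNat + 1 with hK
  have hKz : |z| < (K : ℤ) := by
    rw [hK]
    push_cast
    omega
  have e1 : z = s K := hcontr K hKz
  have e2 : z = s (K + 1) := hcontr (K + 1) (by push_cast at hKz ⊢; omega)
  rw [hssucc K] at e2
  have : a * d K = 0 := by omega
  have hdK := hdpos K
  rcases mul_eq_zero.1 this with h | h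
  · exact ha h
  · omega


lemma lemB' (G : (ℕ → ℤ) →+ ℤ) (d : ℤ) (v : ℕ → ℤ) (h : ∀ p, d ∣ v p) :
    d ∣ G v := by
  have hv : v = d • fun p => v p / d := by
    funext p
    simpa using (Int.mul_ediv_cancel' (h p)).symm
  rw [hv, map_zsmul]
  exact Dvd.intro _ rfl

def ev (jj : ℕ) : (⨁ _ : ℕ, ℤ) →+ ℤ where
  toFun u := u jj
  map_zero' := rfl
  map_add' u v := by simp

lemma lemma2core (g : (ℕ → ℤ) →+ (⨁ _ : ℕ, ℤ))
    (hcon : ∀ m, ∃ i j, m ≤ j ∧ g (Pi.single i 1) j ≠ 0) : False := by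
  classical
  -- Step 1: extract strictly increasing sequences of witnesses
  set bound : ℕ → ℕ := fun I =>
    (Finset.range (I + 1)).sup fun i' => (g (Pi.single i' 1)).support.sup id with hbound
  set F : ℕ × ℕ → ℕ × ℕ := fun q =>
    ⟨(hcon (max (q.2 + 1) (bound q.1 + 1))).choose,
      (hcon (max (q.2 + 1) (bound q.1 + 1))).choose_spec.choose⟩ with hF
  set seq : ℕ → ℕ × ℕ := fun k =>
    Nat.rec ⟨(hcon 0).choose, (hcon 0).choose_spec.choose⟩ (fun _ q => F q) k with hseq
  set i : ℕ → ℕ := fun k => (seq k).1 with hi_def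
  set j : ℕ → ℕ := fun k => (seq k).2 with hj_def
  have hwit : ∀ k, g (Pi.single (i k) 1) (j k) ≠ 0 := by
    intro k
    cases k with
    | zero => exact (hcon 0).choose_spec.choose_spec.2
    | succ k =>
      exact (hcon (max ((seq k).2 + 1) (bound (seq k).1 + 1))).choose_spec.choose_spec.2
  have hjlb : ∀ k, max (j k + 1) (bound (i k) + 1) ≤ j (k + 1) := by
    intro k
    exact (hcon (max ((seq k).2 + 1) (bound (seq k).1 + 1))).choose_spec.choose_spec.1
  have hjmono : StrictMono j := by
    apply strictMono_nat_of_lt_succ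
    intro k
    have := hjlb k
    omega
  have himono : StrictMono i := by
    apply strictMono_nat_of_lt_succ
    intro k
    by_contra hle
    push_neg at hle
    have hmem : j (k + 1) ∈ (g (Pi.single (i (k + 1)) 1)).support :=
      DFinsupp.mem_support_iff.2 (hwit (k + 1))
    have h1 : j (k + 1) ≤ (g (Pi.single (i (k + 1)) 1)).support.sup id :=
      Finset.le_sup (f := id) hmem
    have h2 : (g (Pi.single (i (k + 1)) 1)).support.sup id ≤ bound (i k) := by
      rw [hbound]
      exact Finset.le_sup (f := fun i' => (g (Pi.single i' 1)).support.sup id)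
        (Finset.mem_range.2 (Nat.lt_succ_of_le hle))
    have := hjlb k
    omega
  -- Step 2: the diagonal recursion
  set a : ℕ → ℕ → ℤ := fun k m => g (Pi.single (i k) 1) (j m) with ha_def
  have haa : ∀ k, a k k ≠ 0 := hwit
  set S : ℕ → ℤ × (ℕ → ℤ) := fun K =>
    Nat.rec ((1 : ℤ), fun _ => (0 : ℤ))
      (fun K q =>
        let t : ℕ → ℤ := fun m => ∑ k ∈ Finset.range K, q.2 k * a k m
        let cK : ℤ := q.1 * (1 + ∑ m ∈ Finset.range (K + 1), |t m|)
        let c' : ℕ → ℤ := Function.update q.2 K cK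
        let t' : ℕ → ℤ := fun m => ∑ k ∈ Finset.range (K + 1), c' k * a k m
        (q.1 * ((K : ℤ) + 1 + 2 * ∑ m ∈ Finset.range (K + 1), |t' m|), c')) K
    with hS
  set d : ℕ → ℤ := fun K => (S K).1 with hd_def
  set c : ℕ → ℤ := fun k => (S (k + 1)).2 k with hc_def
  set t : ℕ → ℕ → ℤ := fun K m => ∑ k ∈ Finset.range K, c k * a k m with ht_def
  have hSsucc2 : ∀ K, (S (K + 1)).2 = Function.update (S K).2 K
      ((S K).1 * (1 + ∑ m ∈ Finset.range (K + 1),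
        |∑ k ∈ Finset.range K, (S K).2 k * a k m|)) := fun K => rfl
  have hstab : ∀ L k, k < L → (S L).2 k = c k := by
    intro L
    induction L with
    | zero => omega
    | succ L ih =>
      intro k hk
      rcases Nat.lt_or_ge k L with h' | h'
      · rw [hSsucc2 L, Function.update_of_ne (by omega), ih k h']
      · have : k = L := by omega
        subst this
        rfl
  have ht_eq : ∀ K m, (∑ k ∈ Finset.range K, (S K).2 k * a k m) = t K m := by
    intro K m
    apply Finset.sum_congr rfl
    intro k hk
    rw [hstab K k (Finset.mem_range.1 hk)]
  have hcK : ∀ K, c K = d K * (1 + ∑ m ∈ Finset.range (K + 1), |t K m|) := by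
    intro K
    show (S (K + 1)).2 K = _
    rw [hSsucc2 K, Function.update_self]
    congr 2
    exact Finset.sum_congr rfl fun mm _ => by rw [ht_eq]
  have hd0 : d 0 = 1 := rfl
  have hdsucc : ∀ K, d (K + 1)
      = d K * ((K : ℤ) + 1 + 2 * ∑ m ∈ Finset.range (K + 1), |t (K + 1) m|) := by
    intro K
    have h1 : (S (K + 1)).1 = (S K).1 * ((K : ℤ) + 1
        + 2 * ∑ m ∈ Finset.range (K + 1),
            |∑ k ∈ Finset.range (K + 1), (S (K + 1)).2 k * a k m|) := rfl
    show (S (K + 1)).1 = _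
    rw [h1]
    have hsum : (∑ m ∈ Finset.range (K + 1),
        |∑ k ∈ Finset.range (K + 1), (S (K + 1)).2 k * a k m|)
        = ∑ m ∈ Finset.range (K + 1), |t (K + 1) m| :=
      Finset.sum_congr rfl fun mm _ => by
        congr 1
        exact Finset.sum_congr rfl fun k hk => by
          rw [hstab (K + 1) k (Finset.mem_range.1 hk)]
    rw [hsum]
  have hdpos : ∀ K, 1 ≤ d K := by
    intro K
    induction K with
    | zero => simp [hd0]
    | succ K ih =>
      rw [hdsucc K]
      have h2 : (0 : ℤ) ≤ ∑ m ∈ Finset.range (K + 1), |t (K + 1) m| :=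
        Finset.sum_nonneg fun m _ => abs_nonneg _
      nlinarith [Int.natCast_nonneg K]
  have hddvd : ∀ K L, K ≤ L → d K ∣ d L := by
    intro K L h
    induction L with
    | zero =>
      have : K = 0 := by omega
      subst this
      exact dvd_refl _
    | succ L ih =>
      rcases Nat.lt_or_ge K (L + 1) with h' | h'
      · exact dvd_trans (ih (by omega)) (by rw [hdsucc L]; exact dvd_mul_right _ _)
      · have : K = L + 1 := by omega
        subst this
        exact dvd_refl _
  have hcdvd : ∀ K k, K ≤ k → d K ∣ c k := by
    intro K k h
    rw [hcK k]
    exact dvd_mul_of_dvd_left (hddvd K k h) _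
  have htsucc : ∀ K m, t (K + 1) m = t K m + c K * a K m := by
    intro K m
    rw [ht_def]
    exact Finset.sum_range_succ _ _
  have hcbig : ∀ K m, m ≤ K → 1 + |t K m| ≤ c K := by
    intro K m hm
    rw [hcK K]
    have h1 : |t K m| ≤ ∑ m' ∈ Finset.range (K + 1), |t K m'| :=
      Finset.single_le_sum (f := fun m' => |t K m'|) (fun m' _ => abs_nonneg _)
        (Finset.mem_range.2 (by omega))
    nlinarith [hdpos K, abs_nonneg (t K m),
      Finset.sum_nonneg fun (m' : ℕ) (_ : m' ∈ Finset.range (K + 1)) => abs_nonneg (t K m')]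
  have htne : ∀ K m, m < K → t K m ≠ 0 := by
    intro K
    induction K with
    | zero => omega
    | succ K ih =>
      intro m hm
      rw [htsucc K m]
      by_cases hzero : a K m = 0
      · have hmK : m ≠ K := fun h => haa K (by rw [h] at hzero; exact hzero)
        rw [hzero, mul_zero, add_zero]
        exact ih m (by omega)
      · intro h0
        have h1 : 1 + |t K m| ≤ c K := hcbig K m (by omega)
        have h2 : 1 ≤ |a K m| := Int.one_le_abs hzero
        have h3 : |c K * a K m| = |c K| * |a K m| := abs_mul _ _
        have h4 : c K ≤ |c K| := le_abs_self _
        have h5 : |c K * a K m| = |t K m| := by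
          have : c K * a K m = -(t K m) := by linarith [h0]
          rw [this, abs_neg]
        nlinarith [abs_nonneg (t K m), abs_nonneg (c K)]
  have hdbig : ∀ (K m : ℕ), m < K → (K : ℤ) + 2 * |t K m| ≤ d K := by
    intro K m hm
    cases K with
    | zero => omega
    | succ K =>
      rw [hdsucc K]
      have h1 : |t (K + 1) m| ≤ ∑ m' ∈ Finset.range (K + 1), |t (K + 1) m'| :=
        Finset.single_le_sum (f := fun m' => |t (K + 1) m'|) (fun m' _ => abs_nonneg _)
          (Finset.mem_range.2 (by omega))
      have hc : ((K + 1 : ℕ) : ℤ) = (K : ℤ) + 1 := by push_cast; ring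
      rw [hc]
      nlinarith [hdpos K, abs_nonneg (t (K + 1) m),
        Finset.sum_nonneg fun (m' : ℕ) (_ : m' ∈ Finset.range (K + 1)) => abs_nonneg (t (K + 1) m')]
  -- the diagonal element
  set x : ℕ → ℤ := fun p => ∑ k ∈ Finset.range (p + 1), (if i k = p then c k else 0)
    with hx_def
  set trunc : ℕ → ℕ → ℤ := fun K p => ∑ k ∈ Finset.range K, (if i k = p then c k else 0)
    with htrunc_def
  have hxdvd : ∀ K p, d K ∣ x p - trunc K p := by
    intro K p
    have e1 : trunc K p = ∑ k ∈ Finset.range (min K (p + 1)), (if i k = p then c k else 0) := by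
      show (∑ k ∈ Finset.range K, if i k = p then c k else 0) = _
      rw [← Finset.sum_subset (Finset.range_subset_range.2 (min_le_left K (p + 1)))
        (fun k hk hk' => by
          have hk1 : k < K := Finset.mem_range.1 hk
          have hk2 : ¬ k < min K (p + 1) := fun h => hk' (Finset.mem_range.2 h)
          have hkp : p < k := by omega
          have hki : k ≤ i k := himono.le_apply
          have : i k ≠ p := by omega
          simp [this])]
    have e2 : x p - trunc K p
        = ∑ k ∈ Finset.Ico (min K (p + 1)) (p + 1), (if i k = p then c k else 0) := by
      rw [e1, hx_def]
      rw [Finset.sum_Ico_eq_sub _ (min_le_right K (p + 1))]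
    rw [e2]
    apply Finset.dvd_sum
    intro k hk
    by_cases h : i k = p
    · simp only [h, if_true]
      apply hcdvd
      simp only [Finset.mem_Ico] at hk
      omega
    · simp [h]
  -- evaluation homomorphisms
  have hGtrunc : ∀ K m, ((ev (j m)).comp g) (trunc K) = t K m := by
    intro K m
    have hdecomp : trunc K = ∑ k ∈ Finset.range K, c k • Pi.single (i k) (1 : ℤ) := by
      funext p
      rw [htrunc_def, Finset.sum_apply]
      apply Finset.sum_congr rfl
      intro k _
      by_cases h : i k = p
      · simp [h, Pi.single_apply]
      · simp [h, Pi.single_apply, Ne.symm h]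
    rw [hdecomp, map_sum, ht_def]
    apply Finset.sum_congr rfl
    intro k _
    rw [map_zsmul, smul_eq_mul]
    rfl
  have hkey : ∀ K m, d K ∣ ((ev (j m)).comp g) x - t K m := by
    intro K m
    have h1 := lemB' ((ev (j m)).comp g) (d K) (x - trunc K) (fun p => hxdvd K p)
    rwa [map_sub, hGtrunc K m] at h1
  -- conclusion: `g x` has infinite support, contradiction
  have hne : ∀ m, g x (j m) ≠ 0 := by
    intro m
    set z : ℤ := ((ev (j m)).comp g) x with hz_def
    have hzgx : z = g x (j m) := rfl
    set K : ℕ := max (m + 1) (|z|.toNat + 1) with hK_def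
    have hmK : m < K := by omega
    have hzK : |z| < (K : ℤ) := by
      have : |z|.toNat + 1 ≤ K := le_max_right _ _
      have h0 : (0 : ℤ) ≤ |z| := abs_nonneg _
      omega
    have h1 := hkey K m
    have h2 : |z - t K m| < d K := by
      have := hdbig K m hmK
      have habs : |z - t K m| ≤ |z| + |t K m| := abs_sub _ _
      linarith [abs_nonneg (t K m)]
    have h3 := Int.eq_zero_of_abs_lt_dvd h1 h2
    have h4 : z = t K m := by omega
    rw [← hzgx, h4]
    exact htne K m hmK
  set M : ℕ := (g x).support.sup id + 1 with hM_def
  have hmem : j M ∈ (g x).support := DFinsupp.mem_support_iff.2 (hne M)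
  have h1 : j M ≤ (g x).support.sup id := Finset.le_sup (f := id) hmem
  have h2 : M ≤ j M := hjmono.le_apply
  omega

/-- Any additive homomorphism `ℤ^ℕ → ⊕ ℤ` has image supported in an initial segment. -/
lemma lemma2' (g : (ℕ → ℤ) →+ (⨁ _ : ℕ, ℤ)) :
    ∃ m : ℕ, ∀ (x : ℕ → ℤ) (jj : ℕ), m ≤ jj → g x jj = 0 := by
  have hbasis : ∃ m : ℕ, ∀ i jj, m ≤ jj → g (Pi.single i 1) jj = 0 := by
    by_contra hc
    push_neg at hc
    exact lemma2core g hc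
  obtain ⟨m, hm⟩ := hbasis
  refine ⟨m, fun x jj hj => ?_⟩
  exact specker ((ev jj).comp g) (fun i => hm i jj hj) x

open DirectSum

/-- The countable direct sum of countable direct products of `ℤ` is not isomorphic,
as an abelian group, to the countable direct product of countable direct sums of `ℤ`. -/
theorem directSum_prod_not_iso_prod_directSum :
    ¬ Nonempty ((⨁ _ : ℕ, (ℕ → ℤ)) ≃+ ((_ : ℕ) → ⨁ _ : ℕ, ℤ)) := by
  rintro ⟨φ⟩
  classical
  have hb : ∀ n k : ℕ, ∃ m : ℕ, ∀ (x : ℕ → ℤ) (jj : ℕ), m ≤ jj →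
      φ (DirectSum.of (fun _ : ℕ => ℕ → ℤ) n x) k jj = 0 := by
    intro n k
    obtain ⟨m, hm⟩ := lemma2' ((Pi.evalAddMonoidHom (fun _ : ℕ => ⨁ _ : ℕ, ℤ) k).comp
      (φ.toAddMonoidHom.comp (DirectSum.of (fun _ : ℕ => ℕ → ℤ) n)))
    exact ⟨m, fun x jj hj => hm x jj hj⟩
  choose m hm using hb
  set J : ℕ → ℕ := fun k => (Finset.range (k + 1)).sup fun n => m n k with hJ
  set b : (_ : ℕ) → ⨁ _ : ℕ, ℤ := fun k => DirectSum.of (fun _ : ℕ => ℤ) (J k) 1 with hb_def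
  obtain ⟨v, hv⟩ := φ.surjective b
  set N : ℕ := v.support.sup id + 1 with hN
  have hsum : ∑ n ∈ v.support, DirectSum.of (fun _ : ℕ => ℕ → ℤ) n (v n) = v :=
    DirectSum.sum_support_of v
  have hφv : φ v = ∑ n ∈ v.support, φ (DirectSum.of (fun _ : ℕ => ℕ → ℤ) n (v n)) := by
    rw [← map_sum, hsum]
  have h1 : φ v N (J N)
      = ∑ n ∈ v.support, φ (DirectSum.of (fun _ : ℕ => ℕ → ℤ) n (v n)) N (J N) := by
    rw [hφv, Finset.sum_apply]
    exact map_sum (ev (J N)) _ _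
  have h2 : ∀ n ∈ v.support, φ (DirectSum.of (fun _ : ℕ => ℕ → ℤ) n (v n)) N (J N) = 0 := by
    intro n hn
    apply hm n N (v n) (J N)
    have hn' : n ≤ v.support.sup id := Finset.le_sup (f := id) hn
    exact Finset.le_sup (f := fun n' => m n' N) (Finset.mem_range.2 (by omega))
  have h3 : φ v N (J N) = 0 := by
    rw [h1]
    exact Finset.sum_eq_zero h2
  rw [hv] at h3
  have h4 : b N (J N) = 1 := DirectSum.of_eq_same (J N) 1
  rw [h4] at h3
  exact one_ne_zero h3
end
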